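/- Let A be a Hermitian positive definite matrix on a finite set E, K := A(I+A)⁻¹, B := A⁻¹, and Λ ⊆ E. With K_Λ the compression of K to Λ, A_{[Λ]} := K_Λ(I_Λ − K_Λ)⁻¹ and B_{[Λ]} := (A_{[Λ]})⁻¹, one has B_{[Λ]} ≤ B_Λ in the Loewner order, where B_Λ is the principal submatrix of B indexed by Λ. -/

import Mathlib

open Matrix ComplexOrder

section aux

variable {E m : Type*} [Fintype E] [DecidableEq E] [Fintype m] [DecidableEq m]

lemma aux_PH (e : m → E) (N : Matrix E E ℂ) :
    ((1 : Matrix E E ℂ).submatrix id e)ᴴ * N * ((1 : Matrix E E ℂ).submatrix id e)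
      = N.submatrix e e := by
  ext i j
  simp [Matrix.mul_apply, Matrix.one_apply, Finset.sum_ite_eq, Finset.sum_ite_eq']

lemma aux_PP (e : m → E) (he : Function.Injective e) :
    ((1 : Matrix E E ℂ).submatrix id e)ᴴ * ((1 : Matrix E E ℂ).submatrix id e)
      = (1 : Matrix m m ℂ) := by
  ext i j
  simp [Matrix.mul_apply, Matrix.one_apply, he.eq_iff, Finset.sum_ite_eq]

lemma aux_posdef_submatrix {M : Matrix E E ℂ} (hM : M.PosDef)
    (e : m → E) (he : Function.Injective e) : (M.submatrix e e).PosDef := by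
  set P := (1 : Matrix E E ℂ).submatrix id e with hP
  refine Matrix.posDef_iff_dotProduct_mulVec.mpr ⟨hM.isHermitian.submatrix e, fun x hx => ?_⟩
  have hPx : ∀ j, (P *ᵥ x) (e j) = x j := by
    intro j
    simp [hP, Matrix.mulVec, dotProduct, Matrix.one_apply, he.eq_iff,
      Finset.sum_ite_eq]
  have hPx0 : P *ᵥ x ≠ 0 := by
    intro h
    apply hx
    funext j
    have := congrFun h (e j)
    rwa [hPx j] at this
  have key := hM.dotProduct_mulVec_pos hPx0
  rw [← aux_PH e M]
  simpa only [star_mulVec, dotProduct_mulVec, vecMul_vecMul] using key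

lemma aux_key {M : Matrix E E ℂ} (hM : M.PosDef)
    (e : m → E) (he : Function.Injective e) :
    ((M⁻¹).submatrix e e - (M.submatrix e e)⁻¹).PosSemidef := by
  set P := (1 : Matrix E E ℂ).submatrix id e with hP
  have hdet : IsUnit M.det := (Matrix.isUnit_iff_isUnit_det M).mp hM.isUnit
  have hMΛ : (M.submatrix e e).PosDef := aux_posdef_submatrix hM e he
  have hdetΛ : IsUnit (M.submatrix e e).det :=
    (Matrix.isUnit_iff_isUnit_det _).mp hMΛ.isUnit
  set S := (M.submatrix e e)⁻¹ with hS
  have hSH : Sᴴ = S := hMΛ.isHermitian.inv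
  have hMinvH : M⁻¹ᴴ = M⁻¹ := hM.isHermitian.inv
  set D := M⁻¹ * P - P * S with hDdef
  have hD : Dᴴ = Pᴴ * M⁻¹ - S * Pᴴ := by
    simp [hDdef, Matrix.conjTranspose_sub, Matrix.conjTranspose_mul, hSH, hMinvH]
  have hexp : Dᴴ * M * D = (M⁻¹).submatrix e e - S := by
    rw [hD, hDdef]
    simp only [Matrix.sub_mul, Matrix.mul_sub, ← Matrix.mul_assoc]
    rw [Matrix.mul_assoc Pᴴ M⁻¹ M, Matrix.nonsing_inv_mul M hdet, Matrix.mul_one]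
    rw [Matrix.mul_assoc (S * Pᴴ) M M⁻¹, Matrix.mul_nonsing_inv M hdet, Matrix.mul_one]
    rw [aux_PH e M⁻¹]
    have h2 : Pᴴ * P * S = S := by rw [aux_PP e he, Matrix.one_mul]
    have h3 : S * Pᴴ * P = S := by
      rw [Matrix.mul_assoc, aux_PP e he, Matrix.mul_one]
    have h4 : S * Pᴴ * M * P * S = S := by
      rw [Matrix.mul_assoc S Pᴴ M, Matrix.mul_assoc S (Pᴴ * M) P,
        aux_PH e M, hS, Matrix.nonsing_inv_mul _ hdetΛ, Matrix.one_mul]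
    rw [h2, h3, h4]
    abel
  have := hM.posSemidef.conjTranspose_mul_mul_same D
  rwa [hexp] at this

end aux

theorem stmt_8 {E : Type*} [Fintype E] [DecidableEq E]
    (A : Matrix E E ℂ) (hA : A.PosDef)
    (Λ : Finset E)
    (K B : Matrix E E ℂ) (hK : K = A * (1 + A)⁻¹) (hB : B = A⁻¹)
    (KΛ BΛ : Matrix ↥Λ ↥Λ ℂ)
    (hKΛ : KΛ = K.submatrix (fun i : ↥Λ => (i : E)) (fun i : ↥Λ => (i : E)))
    (hBΛ : BΛ = B.submatrix (fun i : ↥Λ => (i : E)) (fun i : ↥Λ => (i : E))) :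
    (BΛ - (KΛ * (1 - KΛ)⁻¹)⁻¹).PosSemidef := by
  subst hK hB hKΛ hBΛ
  set c : ↥Λ → E := fun i => (i : E) with hc
  have hce : Function.Injective c := Subtype.coe_injective
  have hdetA : IsUnit A.det := (Matrix.isUnit_iff_isUnit_det A).mp hA.isUnit
  have h1A : (1 + A).PosDef := Matrix.PosDef.one.add hA
  have hdet1A : IsUnit (1 + A).det := (Matrix.isUnit_iff_isUnit_det _).mp h1A.isUnit
  have hAinv : A⁻¹.PosDef := hA.inv
  have h1Ainv : (1 + A⁻¹).PosDef := Matrix.PosDef.one.add hAinv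
  have hdet1Ainv : IsUnit (1 + A⁻¹).det := (Matrix.isUnit_iff_isUnit_det _).mp h1Ainv.isUnit
  -- K = (1 + A⁻¹)⁻¹
  have hKeq : (1 + A⁻¹)⁻¹ = A * (1 + A)⁻¹ := by
    apply Matrix.inv_eq_right_inv
    rw [← Matrix.mul_assoc, Matrix.add_mul, Matrix.one_mul, Matrix.nonsing_inv_mul A hdetA,
      add_comm A 1, Matrix.mul_nonsing_inv (1 + A) hdet1A]
  set M : Matrix E E ℂ := A * (1 + A)⁻¹ with hM
  have hKpd : M.PosDef := hKeq ▸ h1Ainv.inv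
  have hKinv : M⁻¹ = 1 + A⁻¹ := by
    rw [← hKeq, Matrix.nonsing_inv_nonsing_inv _ hdet1Ainv]
  have hAinv_eq : A⁻¹ = M⁻¹ - 1 := by rw [hKinv]; abel
  -- 1 - M = (1+A)⁻¹
  have h1K : (1 : Matrix E E ℂ) - M = (1 + A)⁻¹ := by
    nth_rewrite 1 [← Matrix.mul_nonsing_inv (1 + A) hdet1A]
    rw [hM, ← Matrix.sub_mul, add_sub_cancel_right, Matrix.one_mul]
  have hMΛpd : (M.submatrix c c).PosDef := aux_posdef_submatrix hKpd c hce
  have hdetMΛ : IsUnit (M.submatrix c c).det :=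
    (Matrix.isUnit_iff_isUnit_det _).mp hMΛpd.isUnit
  have hsub : ∀ X Y : Matrix E E ℂ, (X - Y).submatrix c c
      = X.submatrix c c - Y.submatrix c c := by
    intro X Y; ext i j; simp
  have h1KΛ : (1 : Matrix ↥Λ ↥Λ ℂ) - M.submatrix c c = ((1 + A)⁻¹).submatrix c c := by
    rw [← h1K, hsub, Matrix.submatrix_one c hce]
  have hCΛpd : (((1 + A)⁻¹).submatrix c c).PosDef := aux_posdef_submatrix h1A.inv c hce
  have hdetCΛ : IsUnit (((1 + A)⁻¹).submatrix c c).det :=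
    (Matrix.isUnit_iff_isUnit_det _).mp hCΛpd.isUnit
  have hinner : (M.submatrix c c * (1 - M.submatrix c c)⁻¹)⁻¹
      = (M.submatrix c c)⁻¹ - 1 := by
    rw [Matrix.mul_inv_rev, h1KΛ, Matrix.nonsing_inv_nonsing_inv _ hdetCΛ, ← h1KΛ,
      Matrix.sub_mul, Matrix.one_mul, Matrix.mul_nonsing_inv _ hdetMΛ]
  rw [hinner, hAinv_eq, hsub, Matrix.submatrix_one c hce, sub_sub_sub_cancel_right]
  exact aux_key hKpd c hce
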